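/- arXiv:1401.1408 — 3 statements merged into one kernel-verified Lean document; each statement's English description precedes it below -/
import Mathlib

section
/- Let q_k and μ_k be the coefficient sequences of F₁(t;x) = exp(-4t³/3+tx) and F₂(t;x) = exp(-t³/3+tx) (with q_k ≡ 0 for k < 0). Then for all k ≥ 0: 2^{k-1} μ_k(x) + δ_{k0}/2 = ∑_{m=0}^{k} q_{k-2m}(x) q_{2m}(x). -/
open Complex

/-- `q_k(x)`: the `k`-th Taylor coefficient in `t` of `F₁(t;x) = exp(-4t³/3 + t·x)`. -/
noncomputable def qpoly (k : ℕ) (x : ℂ) : ℂ :=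
  iteratedDeriv k (fun t : ℂ => Complex.exp (-4 * t ^ 3 / 3 + t * x)) 0 / (Nat.factorial k)

/-- `q_k` extended to integer indices by `q_k ≡ 0` for `k < 0`. -/
noncomputable def qz (k : ℤ) (x : ℂ) : ℂ := if 0 ≤ k then qpoly k.toNat x else 0

/-- `μ_k(x)`: the `k`-th Taylor coefficient in `t` of `F₂(t;x) = exp(-t³/3 + t·x)`. -/
noncomputable def mu (k : ℕ) (x : ℂ) : ℂ :=
  iteratedDeriv k (fun t : ℂ => Complex.exp (-t ^ 3 / 3 + t * x)) 0 / (Nat.factorial k)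

open Finset Filter

private lemma ofScalars_coeff' (c : ℕ → ℂ) (n : ℕ) :
    (FormalMultilinearSeries.ofScalars ℂ c).coeff n = c n := by
  simp [FormalMultilinearSeries.ofScalars, FormalMultilinearSeries.coeff, List.prod_ofFn]

/-- Uniqueness of Taylor coefficients for a function given as an eventual power series sum. -/
private lemma coeffs_unique' {a b : ℕ → ℂ} {f : ℂ → ℂ}
    (ha : ∀ᶠ z in nhds (0:ℂ), HasSum (fun n => a n * z ^ n) (f z))
    (hb : ∀ᶠ z in nhds (0:ℂ), HasSum (fun n => b n * z ^ n) (f z)) : a = b := by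
  have Ha : HasFPowerSeriesAt f (FormalMultilinearSeries.ofScalars ℂ a) 0 := by
    rw [hasFPowerSeriesAt_iff]
    filter_upwards [ha] with z hz
    simpa [ofScalars_coeff', smul_eq_mul, mul_comm] using hz
  have Hb : HasFPowerSeriesAt f (FormalMultilinearSeries.ofScalars ℂ b) 0 := by
    rw [hasFPowerSeriesAt_iff]
    filter_upwards [hb] with z hz
    simpa [ofScalars_coeff', smul_eq_mul, mul_comm] using hz
  funext n
  have h2 := congrArg (fun p : FormalMultilinearSeries ℂ ℂ ℂ => p.coeff n)
    (Ha.eq_formalMultilinearSeries Hb)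
  simpa [ofScalars_coeff'] using h2

private lemma coeff_eq' {f : ℂ → ℂ} {p : FormalMultilinearSeries ℂ ℂ ℂ}
    (hp : HasFPowerSeriesAt f p 0) (k : ℕ) :
    p.coeff k = iteratedDeriv k f 0 / (Nat.factorial k) := by
  obtain ⟨r, hr⟩ := hp
  have h := hr.factorial_smul (1 : ℂ) k
  have hk : ((k.factorial : ℂ)) ≠ 0 := by exact_mod_cast (Nat.factorial_pos k).ne'
  rw [iteratedDeriv_eq_iteratedFDeriv, ← h, nsmul_eq_mul, mul_div_cancel_left₀ _ hk]
  rfl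

private lemma hasSum_taylor' {f : ℂ → ℂ} (hf : AnalyticAt ℂ f 0) :
    ∀ᶠ z in nhds (0 : ℂ),
      HasSum (fun n => iteratedDeriv n f 0 / (Nat.factorial n) * z ^ n) (f z) := by
  obtain ⟨p, hp⟩ := hf
  filter_upwards [hasFPowerSeriesAt_iff.mp hp] with z hz
  simpa [coeff_eq' hp, smul_eq_mul, mul_comm] using hz

private lemma hq_hasSum (x : ℂ) :
    ∀ᶠ z in nhds (0 : ℂ),
      HasSum (fun n => qpoly n x * z ^ n) (Complex.exp (-4 * z ^ 3 / 3 + z * x)) := by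
  have h : AnalyticAt ℂ (fun t : ℂ => Complex.exp (-4 * t ^ 3 / 3 + t * x)) 0 := by
    apply AnalyticAt.cexp
    exact ((analyticAt_const.mul ((analyticAt_id).pow 3)).div analyticAt_const (by norm_num)).add
      ((analyticAt_id).mul analyticAt_const)
  exact hasSum_taylor' h

private lemma hmu_hasSum (x : ℂ) :
    ∀ᶠ z in nhds (0 : ℂ),
      HasSum (fun n => mu n x * z ^ n) (Complex.exp (-z ^ 3 / 3 + z * x)) := by
  have h : AnalyticAt ℂ (fun t : ℂ => Complex.exp (-t ^ 3 / 3 + t * x)) 0 := by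
    apply AnalyticAt.cexp
    exact (((analyticAt_id).pow 3).neg.div analyticAt_const (by norm_num)).add
      ((analyticAt_id).mul analyticAt_const)
  exact hasSum_taylor' h

/-- Cauchy product identity: `F₁(t)² = F₂(2t)` at the level of coefficients. -/
private lemma convA (x : ℂ) (n : ℕ) :
    ∑ j ∈ range (n + 1), qpoly j x * qpoly (n - j) x = 2 ^ n * mu n x := by
  have key : (fun n => ∑ j ∈ range (n + 1), qpoly j x * qpoly (n - j) x)
      = fun n => 2 ^ n * mu n x := by
    apply coeffs_unique' (f := fun z : ℂ =>
      Complex.exp (-4 * z ^ 3 / 3 + z * x) * Complex.exp (-4 * z ^ 3 / 3 + z * x))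
    · filter_upwards [hq_hasSum x] with z hz
      have hn : Summable fun n => ‖qpoly n x * z ^ n‖ := summable_norm_iff.mpr hz.summable
      have H := hasSum_sum_range_mul_of_summable_norm hn hn
      rw [hz.tsum_eq] at H
      convert H using 2 with n
      · rfl
      rw [sum_mul]
      refine sum_congr rfl fun j hj => ?_
      rw [mul_mul_mul_comm, ← pow_add, Nat.add_sub_cancel' (mem_range_succ_iff.mp hj)]
    · have h2 : Filter.Tendsto (fun z : ℂ => 2 * z) (nhds 0) (nhds 0) := by
        simpa using (continuous_mul_left (2 : ℂ)).tendsto (0 : ℂ)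
      filter_upwards [h2.eventually (hmu_hasSum x)] with z hz
      have hfeq : Complex.exp (-(2*z) ^ 3 / 3 + (2*z) * x)
          = Complex.exp (-4 * z ^ 3 / 3 + z * x) * Complex.exp (-4 * z ^ 3 / 3 + z * x) := by
        rw [← Complex.exp_add]; congr 1; ring
      rw [hfeq] at hz
      convert hz using 2 with n
      ring
  exact congrFun key n

/-- Cauchy product identity: `F₁(-t)·F₁(t) = 1` at the level of coefficients. -/
private lemma convB (x : ℂ) (n : ℕ) :
    ∑ j ∈ range (n + 1), (-1 : ℂ) ^ j * qpoly j x * qpoly (n - j) x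
      = if n = 0 then (1 : ℂ) else 0 := by
  have key : (fun n => ∑ j ∈ range (n + 1), (-1 : ℂ) ^ j * qpoly j x * qpoly (n - j) x)
      = fun n => if n = 0 then (1 : ℂ) else 0 := by
    apply coeffs_unique' (f := fun z : ℂ =>
      Complex.exp (-4 * (-z) ^ 3 / 3 + (-z) * x) * Complex.exp (-4 * z ^ 3 / 3 + z * x))
    · have hneg : Filter.Tendsto (fun z : ℂ => -z) (nhds 0) (nhds 0) := by
        simpa using continuous_neg.tendsto (0 : ℂ)
      filter_upwards [hq_hasSum x, hneg.eventually (hq_hasSum x)] with z hz hz'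
      have hz'' : HasSum (fun n => ((-1 : ℂ) ^ n * qpoly n x) * z ^ n)
          (Complex.exp (-4 * (-z) ^ 3 / 3 + (-z) * x)) := by
        convert hz' using 2 with n
        ring
      have hn1 : Summable fun n => ‖((-1 : ℂ) ^ n * qpoly n x) * z ^ n‖ :=
        summable_norm_iff.mpr hz''.summable
      have hn2 : Summable fun n => ‖qpoly n x * z ^ n‖ := summable_norm_iff.mpr hz.summable
      have H := hasSum_sum_range_mul_of_summable_norm hn1 hn2
      rw [hz.tsum_eq, hz''.tsum_eq] at H
      convert H using 2 with n
      · rfl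
      rw [sum_mul]
      refine sum_congr rfl fun j hj => ?_
      rw [show ((-1:ℂ)^j * qpoly j x * z ^ j) * (qpoly (n-j) x * z ^ (n-j))
          = ((-1:ℂ)^j * qpoly j x * qpoly (n-j) x) * (z ^ j * z ^ (n-j)) by ring,
        ← pow_add, Nat.add_sub_cancel' (mem_range_succ_iff.mp hj)]
    · apply Filter.Eventually.of_forall
      intro z
      have h1 : Complex.exp (-4 * (-z) ^ 3 / 3 + (-z) * x) * Complex.exp (-4 * z ^ 3 / 3 + z * x)
          = 1 := by
        rw [← Complex.exp_add, show (-4 * (-z) ^ 3 / 3 + (-z) * x) + (-4 * z ^ 3 / 3 + z * x)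
          = 0 by ring, Complex.exp_zero]
      rw [h1]
      have h2 : HasSum (fun n : ℕ => if n = 0 then (1 : ℂ) else 0) 1 := by
        simpa using hasSum_ite_eq (0 : ℕ) (1 : ℂ)
      convert h2 using 2 with n
      by_cases hn : n = 0 <;> simp [hn]
  exact congrFun key n

private lemma key_combin (k : ℕ) (x : ℂ) :
    ∑ j ∈ range (k + 1), (qpoly j x * qpoly (k - j) x + (-1 : ℂ) ^ j * qpoly j x * qpoly (k - j) x)
      = ∑ m ∈ range (k + 1), 2 * (qz ((k : ℤ) - 2 * m) x * qpoly (2 * m) x) := by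
  have hL : ∑ j ∈ range (k + 1),
      (qpoly j x * qpoly (k - j) x + (-1 : ℂ) ^ j * qpoly j x * qpoly (k - j) x)
      = ∑ j ∈ (range (k + 1)).filter (fun j => Even j), 2 * (qpoly j x * qpoly (k - j) x) := by
    rw [sum_filter]
    refine sum_congr rfl fun j _ => ?_
    rcases Nat.even_or_odd j with he | ho
    · rw [if_pos he, he.neg_one_pow]; ring
    · rw [if_neg (Nat.not_even_iff_odd.mpr ho), ho.neg_one_pow]; ring
  have hR : ∑ m ∈ range (k + 1), 2 * (qz ((k : ℤ) - 2 * m) x * qpoly (2 * m) x)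
      = ∑ m ∈ (range (k + 1)).filter (fun m => 2 * m ≤ k),
          2 * (qpoly (k - 2 * m) x * qpoly (2 * m) x) := by
    rw [sum_filter]
    refine sum_congr rfl fun m _ => ?_
    by_cases h : 2 * m ≤ k
    · rw [if_pos h, qz, if_pos (by omega)]
      congr 3
      omega
    · rw [if_neg h, qz, if_neg (by omega), zero_mul, mul_zero]
  rw [hL, hR]
  refine sum_nbij' (fun j => j / 2) (fun m => 2 * m) ?_ ?_ ?_ ?_ ?_
  · intro a ha
    simp only [mem_filter, mem_range] at ha ⊢
    obtain ⟨h1, m, hm⟩ := ha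
    omega
  · intro a ha
    simp only [mem_filter, mem_range] at ha ⊢
    exact ⟨by omega, 2 * a / 2, by omega⟩
  · intro a ha
    simp only [mem_filter, mem_range] at ha
    obtain ⟨h1, m, hm⟩ := ha
    show 2 * (a / 2) = a
    omega
  · intro a ha
    show 2 * a / 2 = a
    omega
  · intro a ha
    simp only [mem_filter, mem_range] at ha
    obtain ⟨h1, m, hm⟩ := ha
    have h2 : 2 * (a / 2) = a := by omega
    show _ = 2 * (qpoly (k - 2 * (a/2)) x * qpoly (2 * (a/2)) x)
    rw [h2]
    ring

theorem q_mu_even_convolution (k : ℕ) (x : ℂ) :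
    (2 : ℂ) ^ ((k : ℤ) - 1) * mu k x + (if k = 0 then (1 : ℂ) else 0) / 2 =
      ∑ m ∈ Finset.range (k + 1), qz ((k : ℤ) - 2 * m) x * qpoly (2 * m) x := by
  have hA := convA x k
  have hB := convB x k
  have hpow : (2 : ℂ) ^ ((k : ℤ) - 1) = 2 ^ k / 2 := by
    rw [zpow_sub₀ (by norm_num : (2:ℂ) ≠ 0), zpow_natCast, zpow_one]
  have key : ∑ j ∈ range (k + 1), qpoly j x * qpoly (k - j) x
      + ∑ j ∈ range (k + 1), (-1 : ℂ) ^ j * qpoly j x * qpoly (k - j) x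
      = 2 * ∑ m ∈ range (k + 1), qz ((k : ℤ) - 2 * m) x * qpoly (2 * m) x := by
    rw [← sum_add_distrib, Finset.mul_sum]
    exact key_combin k x
  rw [hpow]
  linear_combination (key - hA - hB) / 2
end

section
/- Let q_k and μ_k be the coefficient sequences of F₁(t;x) = exp(-4t³/3+tx) and F₂(t;x) = exp(-t³/3+tx) (with q_k ≡ 0 for k < 0). Then for all k ≥ 0: 2^{k-1} μ_k(x) - δ_{k0}/2 = ∑_{m=0}^{k} q_{k-2m-1}(x) q_{2m+1}(x). -/
open Complex

lemma taylor_coeff_of_hasSum {f : ℂ → ℂ} {c : ℕ → ℂ}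
    (h : ∀ z : ℂ, HasSum (fun n ↦ c n * z ^ n) (f z)) (n : ℕ) :
    iteratedDeriv n f 0 / (Nat.factorial n) = c n := by
  set p : FormalMultilinearSeries ℂ ℂ ℂ :=
    fun n => c n • ContinuousMultilinearMap.mkPiAlgebraFin ℂ n ℂ with hp
  have happ : ∀ (n : ℕ) (y : ℂ), (p n fun _ => y) = c n * y ^ n := by
    intro n y
    simp [hp, ContinuousMultilinearMap.mkPiAlgebraFin_apply, List.prod_ofFn]
  have hrad : p.radius = ⊤ := by
    refine ENNReal.eq_top_of_forall_nnreal_le fun r => ?_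
    apply p.le_radius_of_summable
    have hs : Summable fun n => ‖c n * (r : ℂ) ^ n‖ := by
      rw [summable_norm_iff]
      exact (h r).summable
    apply hs.of_nonneg_of_le (fun n => by positivity)
    intro n
    have hpn : ‖p n‖ ≤ ‖c n‖ :=
      (norm_smul_le (c n) (ContinuousMultilinearMap.mkPiAlgebraFin ℂ n ℂ)).trans (by rw [ContinuousMultilinearMap.norm_mkPiAlgebraFin, mul_one])
    have hnorm : ‖c n * (r : ℂ) ^ n‖ = ‖c n‖ * (r : ℝ) ^ n := by
      rw [norm_mul, norm_pow, Complex.norm_real, Real.norm_of_nonneg r.coe_nonneg]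
    rw [hnorm]
    gcongr
  have H : HasFPowerSeriesOnBall f p 0 ⊤ :=
    ⟨by rw [hrad], ENNReal.zero_lt_top, fun {y} _ => by simpa [happ] using h y⟩
  have h1 := H.factorial_smul (1 : ℂ) n
  rw [happ, ← iteratedDeriv_eq_iteratedFDeriv] at h1
  rw [← h1]
  simp [div_eq_iff, Nat.factorial_ne_zero, mul_comm, Nat.cast_ne_zero]



lemma hasSum_q (x z : ℂ) :
    HasSum (fun n : ℕ ↦ qpoly n x * z ^ n) (Complex.exp (-4 * z ^ 3 / 3 + z * x)) := by
  have hd : Differentiable ℂ (fun t : ℂ => Complex.exp (-4 * t ^ 3 / 3 + t * x)) := by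
    fun_prop
  have := Complex.hasSum_taylorSeries_of_entire hd 0 z
  convert this using 2 with n
  · rfl
  simp only [qpoly, sub_zero, smul_eq_mul]
  ring

lemma hasSum_mu (x z : ℂ) :
    HasSum (fun n : ℕ ↦ mu n x * z ^ n) (Complex.exp (-z ^ 3 / 3 + z * x)) := by
  have hd : Differentiable ℂ (fun t : ℂ => Complex.exp (-t ^ 3 / 3 + t * x)) := by
    fun_prop
  have := Complex.hasSum_taylorSeries_of_entire hd 0 z
  convert this using 2 with n
  · rfl
  simp only [mu, sub_zero, smul_eq_mul]
  ring

lemma conv_S (x : ℂ) (n : ℕ) :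
    ∑ j ∈ Finset.range (n + 1), qpoly j x * qpoly (n - j) x = 2 ^ n * mu n x := by
  set g : ℂ → ℂ := fun z => Complex.exp (-4 * z ^ 3 / 3 + z * x) *
    Complex.exp (-4 * z ^ 3 / 3 + z * x) with hg
  have na : ∀ z : ℂ, Summable fun n => ‖qpoly n x * z ^ n‖ := fun z =>
    summable_norm_iff.mpr (hasSum_q x z).summable
  have hS : ∀ z : ℂ, HasSum
      (fun n => (∑ j ∈ Finset.range (n + 1), qpoly j x * qpoly (n - j) x) * z ^ n) (g z) := by
    intro z
    have H := hasSum_sum_range_mul_of_summable_norm (na z) (na z)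
    rw [(hasSum_q x z).tsum_eq] at H
    convert H using 2 with n
    · rfl
    rw [Finset.sum_mul]
    refine Finset.sum_congr rfl fun j hj => ?_
    have hj' : j ≤ n := by simpa using Nat.lt_succ_iff.mp (Finset.mem_range.mp hj)
    rw [mul_mul_mul_comm, ← pow_add, Nat.add_sub_cancel' hj']
  have hS2 : ∀ z : ℂ, HasSum (fun n => (2 ^ n * mu n x) * z ^ n) (g z) := by
    intro z
    have H := hasSum_mu x (2 * z)
    have : g z = Complex.exp (-(2 * z) ^ 3 / 3 + 2 * z * x) := by
      show Complex.exp _ * Complex.exp _ = _; rw [← Complex.exp_add]; congr 1; ring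
    rw [← this] at H
    convert H using 2 with n
    rw [mul_pow]; ring
  have e1 := taylor_coeff_of_hasSum hS n
  have e2 := taylor_coeff_of_hasSum hS2 n
  rw [← e1, e2]

lemma conv_T (x : ℂ) (n : ℕ) :
    ∑ j ∈ Finset.range (n + 1), (-1 : ℂ) ^ j * qpoly j x * qpoly (n - j) x =
      if n = 0 then 1 else 0 := by
  have na : ∀ z : ℂ, Summable fun n => ‖qpoly n x * z ^ n‖ := fun z =>
    summable_norm_iff.mpr (hasSum_q x z).summable
  have hb : ∀ z : ℂ, HasSum (fun n => ((-1 : ℂ) ^ n * qpoly n x) * z ^ n)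
      (Complex.exp (-4 * (-z) ^ 3 / 3 + (-z) * x)) := by
    intro z
    convert hasSum_q x (-z) using 2 with n
    rw [neg_pow]; ring
  have nb : ∀ z : ℂ, Summable fun n => ‖((-1 : ℂ) ^ n * qpoly n x) * z ^ n‖ := fun z =>
    summable_norm_iff.mpr (hb z).summable
  have hT : ∀ z : ℂ, HasSum
      (fun n => (∑ j ∈ Finset.range (n + 1), (-1 : ℂ) ^ j * qpoly j x * qpoly (n - j) x) * z ^ n)
      ((fun _ : ℂ => (1 : ℂ)) z) := by
    intro z
    have H := hasSum_sum_range_mul_of_summable_norm (nb z) (na z)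
    rw [(hb z).tsum_eq, (hasSum_q x z).tsum_eq, ← Complex.exp_add] at H
    have hv : Complex.exp (-4 * (-z) ^ 3 / 3 + -z * x + (-4 * z ^ 3 / 3 + z * x)) = 1 := by
      rw [show -4 * (-z) ^ 3 / 3 + -z * x + (-4 * z ^ 3 / 3 + z * x) = 0 by ring,
        Complex.exp_zero]
    rw [hv] at H
    convert H using 2 with n
    · rfl
    rw [Finset.sum_mul]
    refine Finset.sum_congr rfl fun j hj => ?_
    have hj' : j ≤ n := Nat.lt_succ_iff.mp (Finset.mem_range.mp hj)
    rw [show ((-1:ℂ)^j * qpoly j x) * z^j * (qpoly (n-j) x * z^(n-j))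
        = ((-1:ℂ)^j * qpoly j x * qpoly (n-j) x) * (z^j * z^(n-j)) by ring,
      ← pow_add, Nat.add_sub_cancel' hj']
  have hT2 : ∀ z : ℂ, HasSum (fun n : ℕ => (if n = 0 then (1:ℂ) else 0) * z ^ n)
      ((fun _ : ℂ => (1 : ℂ)) z) := by
    intro z
    convert hasSum_ite_eq 0 (1 : ℂ) using 2 with n
    by_cases hn : n = 0 <;> simp [hn]
  have e1 := taylor_coeff_of_hasSum hT n
  have e2 := taylor_coeff_of_hasSum hT2 n
  rw [← e1, e2]


theorem q_mu_odd_convolution (k : ℕ) (x : ℂ) :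
    (2 : ℂ) ^ ((k : ℤ) - 1) * mu k x - (if k = 0 then (1 : ℂ) else 0) / 2 =
      ∑ m ∈ Finset.range (k + 1), qz ((k : ℤ) - 2 * m - 1) x * qpoly (2 * m + 1) x := by
  have step1 : ∑ m ∈ Finset.range (k + 1), qz ((k : ℤ) - 2 * m - 1) x * qpoly (2 * m + 1) x
      = ∑ m ∈ Finset.range (k + 1),
        (if 2 * m + 1 ≤ k then qpoly (2 * m + 1) x * qpoly (k - (2 * m + 1)) x else 0) := by
    refine Finset.sum_congr rfl fun m _ => ?_
    by_cases h : 2 * m + 1 ≤ k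
    · rw [if_pos h]
      have h0 : (0 : ℤ) ≤ (k : ℤ) - 2 * m - 1 := by push_cast; omega
      have ht : ((k : ℤ) - 2 * m - 1).toNat = k - (2 * m + 1) := by omega
      rw [qz, if_pos h0, ht, mul_comm]
    · rw [if_neg h, qz, if_neg (by push_cast; omega), zero_mul]
  have step2 : ∑ m ∈ Finset.range (k + 1),
        (if 2 * m + 1 ≤ k then qpoly (2 * m + 1) x * qpoly (k - (2 * m + 1)) x else 0)
      = ∑ j ∈ Finset.range (k + 1),
        (if Odd j then qpoly j x * qpoly (k - j) x else 0) := by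
    rw [← Finset.sum_filter, ← Finset.sum_filter]
    refine Finset.sum_nbij' (fun m => 2 * m + 1) (fun j => j / 2) ?_ ?_ ?_ ?_ ?_
    · intro a ha
      simp only [Finset.mem_filter, Finset.mem_range] at ha ⊢
      exact ⟨by omega, ⟨a, by omega⟩⟩
    · intro a ha
      simp only [Finset.mem_filter, Finset.mem_range] at ha ⊢
      obtain ⟨h1, r, hr⟩ := ha
      omega
    · intro a ha; show (2 * a + 1) / 2 = a; omega
    · intro a ha
      simp only [Finset.mem_filter, Finset.mem_range] at ha
      obtain ⟨h1, r, hr⟩ := ha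
      show 2 * (a / 2) + 1 = a
      omega
    · intro a ha; rfl
  have step3 : ∑ j ∈ Finset.range (k + 1),
        (if Odd j then qpoly j x * qpoly (k - j) x else 0)
      = (∑ j ∈ Finset.range (k + 1), qpoly j x * qpoly (k - j) x) / 2
        - (∑ j ∈ Finset.range (k + 1), (-1 : ℂ) ^ j * qpoly j x * qpoly (k - j) x) / 2 := by
    rw [Finset.sum_div, Finset.sum_div, ← Finset.sum_sub_distrib]
    refine Finset.sum_congr rfl fun j _ => ?_
    rcases Nat.even_or_odd j with h | h
    · rw [if_neg (Nat.not_odd_iff_even.mpr h), h.neg_one_pow]; ring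
    · rw [if_pos h, h.neg_one_pow]; ring
  rw [step1, step2, step3, conv_S, conv_T]
  have h2 : (2 : ℂ) ^ ((k : ℤ) - 1) = 2 ^ k / 2 := by
    rw [zpow_sub₀ (two_ne_zero), zpow_natCast, zpow_one]
  rw [h2]
  ring
end

section
/- Define the Vorob'ev–Yablonski polynomials by Q₀(x)=1, Q₁(x)=x and Q_{n+1}(x)·Q_{n-1}(x) = x·Q_n(x)² - 4(Q_n''(x)·Q_n(x) - Q_n'(x)²). Then for every n ≥ 0, Q_n is a monic polynomial of degree n(n+1)/2. -/
open Polynomial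

noncomputable section VY

def Tv (f : ℂ[X]) : ℂ[X] := X * f ^ 2 - 4 * (derivative (derivative f) * f - derivative f ^ 2)

def Uv (f : ℂ[X]) : ℂ[X] :=
  f ^ 2 + 2 * X * f * derivative f -
    4 * (derivative (derivative (derivative f)) * f - derivative f * derivative (derivative f))

def Vv (f : ℂ[X]) : ℂ[X] :=
  4 * f * derivative f + 2 * X * derivative f ^ 2 + 2 * X * f * derivative (derivative f) -
    4 * (derivative (derivative (derivative (derivative f))) * f - derivative (derivative f) ^ 2)

lemma deriv_Tv (f : ℂ[X]) : derivative (Tv f) = Uv f := by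
  simp only [Tv, Uv, derivative_sub, derivative_add, derivative_mul, derivative_X,
    derivative_pow, derivative_ofNat, derivative_one, map_ofNat, Nat.cast_ofNat]
  ring

lemma deriv_Uv (f : ℂ[X]) : derivative (Uv f) = Vv f := by
  simp only [Uv, Vv, derivative_sub, derivative_add, derivative_mul, derivative_X,
    derivative_pow, derivative_ofNat, derivative_one, map_ofNat, Nat.cast_ofNat]
  ring

def Qs : ℕ → ℂ[X]
  | 0 => 1
  | 1 => X
  | (n+2) => Tv (Qs (n+1)) / Qs n

lemma Qs0 : Qs 0 = 1 := rfl
lemma Qs1 : Qs 1 = X := rfl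

lemma Qs2 : Qs 2 = X ^ 3 + 4 := by
  show Tv (Qs 1) / Qs 0 = _
  rw [Qs0, Qs1, EuclideanDomain.div_one]
  simp only [Tv, derivative_X, derivative_one]
  ring

lemma Qs3 : Qs 3 = X ^ 6 + 20 * X ^ 3 - 80 := by
  have h : Tv (Qs 2) = X * (X ^ 6 + 20 * X ^ 3 - 80) := by
    rw [Qs2]
    simp [Tv, derivative_pow, map_ofNat, Nat.cast_ofNat]
    ring
  show Tv (Qs 2) / Qs 1 = _
  rw [h, Qs1, mul_div_cancel_left₀ _ X_ne_zero]



/-- `Wm g = g''·g − (g')²`. -/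
def Wm (g : ℂ[X]) : ℂ[X] := derivative (derivative g) * g - derivative g ^ 2

lemma Wm_linear_factor (a : ℂ) (h : ℂ[X]) :
    Wm ((X - C a) * h) = (X - C a) ^ 2 * Wm h - h ^ 2 := by
  have h1 : derivative ((X - C a) * h) = h + (X - C a) * derivative h := by
    simp [derivative_mul]
  have h2 : derivative (h + (X - C a) * derivative h)
      = 2 * derivative h + (X - C a) * derivative (derivative h) := by
    simp [derivative_mul]
    ring
  simp only [Wm, h1, h2]
  ring

lemma Wm_pow_factor (a : ℂ) (t : ℕ) (u : ℂ[X]) :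
    Wm ((X - C a) ^ (t + 1) * u) =
      (X - C a) ^ (2 * t) * ((X - C a) ^ 2 * Wm u - ((t : ℂ[X]) + 1) * u ^ 2) := by
  induction t generalizing u with
  | zero => simpa using Wm_linear_factor a u
  | succ t ih =>
      have h1 : (X - C a) ^ (t + 1 + 1) * u = (X - C a) * ((X - C a) ^ (t + 1) * u) := by ring
      rw [h1, Wm_linear_factor, ih]
      push_cast
      ring

lemma not_pow_rootMultiplicity_dvd_Wm {q : ℂ[X]} (hq : q ≠ 0) {a : ℂ} (ha : q.IsRoot a) :
    ¬ (X - C a) ^ (2 * rootMultiplicity a q) ∣ Wm q := by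
  intro hdvd
  set m := rootMultiplicity a q with hm
  have hm1 : 1 ≤ m := (rootMultiplicity_pos hq).mpr ha
  obtain ⟨t, ht⟩ : ∃ t, m = t + 1 := ⟨m - 1, by omega⟩
  set u := q /ₘ (X - C a) ^ m with hu
  have hqu : (X - C a) ^ m * u = q := pow_mul_divByMonic_rootMultiplicity_eq q a
  have hua : u.eval a ≠ 0 := eval_divByMonic_pow_rootMultiplicity_ne_zero a hq
  rw [← hqu, ht, Wm_pow_factor] at hdvd
  set V : ℂ[X] := (X - C a) ^ 2 * Wm u - ((t : ℂ[X]) + 1) * u ^ 2 with hV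
  obtain ⟨c, hc⟩ := hdvd
  have hpow : (X - C a) ^ (2 * t) ≠ 0 := pow_ne_zero _ (X_sub_C_ne_zero a)
  have h2 : V = (X - C a) ^ 2 * c := by
    apply mul_left_cancel₀ hpow
    rw [hc]
    ring
  have h3 : (X - C a) ∣ V := by
    rw [h2]
    exact Dvd.dvd.mul_right (dvd_pow_self _ (by norm_num)) c
  have h4 : V.eval a = 0 := by
    have := dvd_iff_isRoot.mp h3
    exact this
  rw [hV] at h4
  simp only [eval_sub, eval_mul, eval_pow, eval_add, eval_one, eval_natCast, eval_X, eval_C,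
    sub_self] at h4
  have h5 : ((t : ℂ) + 1) * u.eval a ^ 2 = 0 := by linear_combination -h4
  rcases mul_eq_zero.mp h5 with h | h
  · have h6 : ((t : ℂ) + 1) ≠ 0 := by
      have : ((t + 1 : ℕ) : ℂ) ≠ 0 := Nat.cast_ne_zero.mpr (by omega)
      push_cast at this
      exact this
    exact h6 h
  · exact hua (pow_eq_zero_iff (by norm_num) |>.mp h)

lemma exists_common_root {q r : ℂ[X]} (h : ¬ IsCoprime q r) :
    ∃ a : ℂ, q.IsRoot a ∧ r.IsRoot a := by
  classical
  set g := EuclideanDomain.gcd q r with hg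
  have hgu : ¬ IsUnit g := fun hu => h (EuclideanDomain.gcd_isUnit_iff.mp hu)
  have hdeg : g.degree ≠ 0 := fun hd => hgu (isUnit_iff_degree_eq_zero.mpr hd)
  obtain ⟨a, haroot⟩ := Complex.isAlgClosed.exists_root g hdeg
  refine ⟨a, ?_, ?_⟩
  · exact dvd_iff_isRoot.mp ((dvd_iff_isRoot.mpr haroot).trans (EuclideanDomain.gcd_dvd_left q r))
  · exact dvd_iff_isRoot.mp ((dvd_iff_isRoot.mpr haroot).trans (EuclideanDomain.gcd_dvd_right q r))

lemma coprime_step {p q r c : ℂ[X]} (hq0 : q ≠ 0) (hr0 : r ≠ 0)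
    (hA : r * p = Tv q) (hB : derivative r * p - r * derivative p = c * q ^ 2)
    (hcop : IsCoprime p q) : IsCoprime q r := by
  by_contra hn
  obtain ⟨a, haq, har⟩ := exists_common_root hn
  set d : ℂ[X] := X - C a with hd
  have hdq : d ∣ q := dvd_iff_isRoot.mpr haq
  have hdp : ¬ d ∣ p := by
    intro hdvd
    exact not_isUnit_X_sub_C a (hcop.isUnit_of_dvd' hdvd hdq)
  set m := rootMultiplicity a q with hm
  set kk := rootMultiplicity a r with hk
  have hm1 : 1 ≤ m := (rootMultiplicity_pos hq0).mpr haq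
  have hk1 : 1 ≤ kk := (rootMultiplicity_pos hr0).mpr har
  have hdmq : d ^ m ∣ q := pow_rootMultiplicity_dvd q a
  have hdkr : d ^ kk ∣ r := pow_rootMultiplicity_dvd r a
  have hq2 : d ^ (2 * m) ∣ q ^ 2 := by
    have h01 : (d ^ m) ^ 2 ∣ q ^ 2 := pow_dvd_pow_of_dvd hdmq 2
    rwa [← pow_mul, mul_comm m 2] at h01
  -- step 1 : `kk ≥ 2m+1`
  have hk2 : 2 * m + 1 ≤ kk := by
    by_contra hcon
    push_neg at hcon
    have h1 : d ^ kk ∣ q ^ 2 := (pow_dvd_pow d (by omega : kk ≤ 2 * m)).trans hq2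
    have h2 : d ^ kk ∣ derivative r * p := by
      have he : derivative r * p = c * q ^ 2 + r * derivative p := by linear_combination hB
      rw [he]
      exact dvd_add (h1.mul_left c) (hdkr.mul_right _)
    have hcoppow : IsCoprime (d ^ kk) p :=
      (((prime_X_sub_C a).coprime_iff_not_dvd.mpr hdp)).pow_left
    have h3 : d ^ kk ∣ derivative r := hcoppow.dvd_of_dvd_mul_right h2
    have hdr0 : derivative r ≠ 0 := by
      intro h0
      have hdeg : r.natDegree = 0 := natDegree_eq_zero_of_derivative_eq_zero h0
      obtain ⟨b, rfl⟩ := natDegree_eq_zero.mp hdeg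
      have : b = 0 := by simpa [IsRoot] using har
      simp [this] at hr0
    have h4 : kk ≤ rootMultiplicity a (derivative r) := (le_rootMultiplicity_iff hdr0).mpr h3
    rw [derivative_rootMultiplicity_of_root har] at h4
    omega
  -- step 2 : contradiction with `Wm q`
  have h5 : d ^ (2 * m) ∣ r * p := ((pow_dvd_pow d (by omega : 2 * m ≤ kk)).trans hdkr).mul_right p
  rw [hA] at h5
  have h6 : d ^ (2 * m) ∣ X * q ^ 2 := hq2.mul_left X
  have h7 : d ^ (2 * m) ∣ (-4 : ℂ[X]) * Wm q := by
    have he : (-4 : ℂ[X]) * Wm q = Tv q - X * q ^ 2 := by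
      simp only [Tv, Wm]; ring
    rw [he]
    exact dvd_sub h5 h6
  have h8 : d ^ (2 * m) ∣ Wm q := by
    have hu : (C (-(1/4) : ℂ)) * ((-4 : ℂ[X]) * Wm q) = Wm q := by
      have h9 : (C (-(1/4) : ℂ)) * (-4 : ℂ[X]) = 1 := by
        have : (-4 : ℂ[X]) = C (-4 : ℂ) := by
          simp only [map_neg, map_ofNat]
        rw [this, ← C_mul]
        norm_num
      calc (C (-(1/4) : ℂ)) * ((-4 : ℂ[X]) * Wm q) = ((C (-(1/4) : ℂ)) * (-4 : ℂ[X])) * Wm q := by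
            ring
        _ = Wm q := by rw [h9, one_mul]
    rw [← hu]
    exact h7.mul_left _
  exact not_pow_rootMultiplicity_dvd_Wm hq0 haq h8

lemma monic_Tv {f : ℂ[X]} (hf : f.Monic) :
    (Tv f).Monic ∧ (Tv f).natDegree = 2 * f.natDegree + 1 := by
  by_cases h0 : f.natDegree = 0
  · have hf1 : f = 1 := hf.natDegree_eq_zero.mp h0
    have : Tv f = X := by
      rw [hf1]; simp [Tv]
    rw [this, h0]
    exact ⟨monic_X, by simp⟩
  · set n := f.natDegree with hn
    have hn1 : 0 < n := Nat.pos_of_ne_zero h0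
    have hXf : (X * f ^ 2).Monic := monic_X.mul (hf.pow 2)
    have hdegXf : (X * f ^ 2).natDegree = 2 * n + 1 := by
      rw [natDegree_mul X_ne_zero (pow_ne_zero _ hf.ne_zero), natDegree_X, natDegree_pow]
      ring
    have hdegXf' : (X * f ^ 2).degree = ((2 * n + 1 : ℕ) : WithBot ℕ) := by
      rw [degree_eq_natDegree hXf.ne_zero, hdegXf]
    have hf' : degree (derivative f) = ((n - 1 : ℕ) : WithBot ℕ) := degree_derivative_eq f hn1
    have hfd : degree f = (n : WithBot ℕ) := degree_eq_natDegree hf.ne_zero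
    have hb1 : degree (derivative (derivative f) * f) ≤ ((2 * n - 1 : ℕ) : WithBot ℕ) := by
      refine (degree_mul_le _ _).trans ?_
      calc degree (derivative (derivative f)) + degree f
          ≤ degree (derivative f) + degree f := add_le_add degree_derivative_le le_rfl
        _ = ((n - 1 : ℕ) : WithBot ℕ) + (n : WithBot ℕ) := by rw [hf', hfd]
        _ = ((n - 1 + n : ℕ) : WithBot ℕ) := by exact_mod_cast rfl
        _ ≤ ((2 * n - 1 : ℕ) : WithBot ℕ) := by
            apply Nat.cast_le.mpr
            omega
    have hb2 : degree (derivative f ^ 2) ≤ ((2 * n - 1 : ℕ) : WithBot ℕ) := by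
      refine (degree_pow_le _ 2).trans ?_
      rw [hf']
      calc (2 : ℕ) • ((n - 1 : ℕ) : WithBot ℕ) = ((2 * (n - 1) : ℕ) : WithBot ℕ) := by
            rw [nsmul_eq_mul]
            exact_mod_cast rfl
        _ ≤ ((2 * n - 1 : ℕ) : WithBot ℕ) := by
            apply Nat.cast_le.mpr
            omega
    have hb3 : degree (4 * (derivative (derivative f) * f - derivative f ^ 2))
        < degree (X * f ^ 2) := by
      refine (degree_mul_le _ _).trans_lt ?_
      have h4 : degree (4 : ℂ[X]) = 0 := by
        have : (4 : ℂ[X]) = C 4 := by simp only [map_ofNat]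
        rw [this]
        exact degree_C (by norm_num)
      rw [h4, zero_add, hdegXf']
      refine (degree_sub_le _ _).trans_lt ?_
      refine max_lt ?_ ?_ <;>
        [exact hb1.trans_lt (Nat.cast_lt.mpr (by omega));
         exact hb2.trans_lt (Nat.cast_lt.mpr (by omega))]
    have hsub : Tv f = X * f ^ 2 + (-(4 * (derivative (derivative f) * f - derivative f ^ 2))) := by
      rw [Tv]; ring
    constructor
    · rw [hsub]
      exact hXf.add_of_left (by rwa [degree_neg])
    · have hdeg : (Tv f).degree = ((2 * n + 1 : ℕ) : WithBot ℕ) := by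
        rw [hsub, degree_add_eq_left_of_degree_lt (by rwa [degree_neg]), hdegXf']
      exact natDegree_eq_of_degree_eq_some hdeg

lemma monic_deg_of_rec {A B F : ℂ[X]} (h : A * B = Tv F) (hB : B.Monic) (hF : F.Monic) :
    A.Monic ∧ A.natDegree + B.natDegree = 2 * F.natDegree + 1 := by
  obtain ⟨hm, hd⟩ := monic_Tv hF
  rw [← h] at hm hd
  have hA0 : A ≠ 0 := by
    intro h0
    rw [h0, zero_mul] at hm
    exact hm.ne_zero rfl
  rw [natDegree_mul hA0 hB.ne_zero] at hd
  exact ⟨hB.of_mul_monic_right hm, hd⟩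

/-- The joint inductive package. -/
def pk (n : ℕ) : Prop :=
  Qs (n+2) * Qs n = Tv (Qs (n+1)) ∧
  derivative (Qs (n+2)) * Qs n - Qs (n+2) * derivative (Qs n)
      = (2 * (n : ℂ[X]) + 3) * Qs (n+1) ^ 2 ∧
  IsCoprime (Qs (n+1)) (Qs (n+2)) ∧
  (Qs (n+1)).Monic ∧ (Qs (n+2)).Monic ∧
  2 * (Qs (n+2)).natDegree = (n+2) * (n+3)

lemma Tv_X : Tv (X : ℂ[X]) = X ^ 3 + 4 := by
  simp only [Tv, derivative_X, derivative_one]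
  ring

lemma Tv_Q2 : Tv ((X : ℂ[X]) ^ 3 + 4) = X * (X ^ 6 + 20 * X ^ 3 - 80) := by
  simp [Tv, derivative_pow, map_ofNat, Nat.cast_ofNat]
  ring

lemma dQ2 : derivative ((X : ℂ[X]) ^ 3 + 4) = 3 * X ^ 2 := by
  simp [derivative_pow, map_ofNat, Nat.cast_ofNat]

lemma dQ3 : derivative ((X : ℂ[X]) ^ 6 + 20 * X ^ 3 - 80) = 6 * X ^ 5 + 60 * X ^ 2 := by
  simp [derivative_pow, map_ofNat, Nat.cast_ofNat]
  ring

lemma pk0 : pk 0 := by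
  have hrec : Qs 2 * Qs 0 = Tv (Qs 1) := by
    rw [Qs0, Qs2, Qs1, Tv_X, mul_one]
  refine ⟨hrec, ?_, ?_, monic_X, ?_, ?_⟩
  · rw [Qs0, Qs2, Qs1, dQ2]
    simp only [derivative_one, Nat.cast_zero]
    ring
  · rw [Qs1, Qs2]
    refine ⟨-(C (1/4 : ℂ)) * X ^ 2, C (1/4 : ℂ), ?_⟩
    have hc : (C (1/4 : ℂ)) * 4 = 1 := by
      rw [show (4 : ℂ[X]) = C (4 : ℂ) by simp only [map_ofNat], ← C_mul]
      norm_num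
    linear_combination hc
  · rw [Qs2, ← Tv_X]
    exact (monic_Tv monic_X).1
  · rw [Qs2, ← Tv_X, (monic_Tv monic_X).2]
    simp
lemma pk1 : pk 1 := by
  have hrec : Qs 3 * Qs 1 = Tv (Qs 2) := by
    rw [Qs1, Qs2, Qs3, Tv_Q2]
    ring
  have hm2 : (Qs 2).Monic := by
    rw [Qs2, ← Tv_X]
    exact (monic_Tv monic_X).1
  obtain ⟨hm3, hd3⟩ := monic_deg_of_rec hrec monic_X hm2
  refine ⟨hrec, ?_, ?_, hm2, hm3, ?_⟩
  · rw [Qs1, Qs2, Qs3, dQ3]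
    simp only [derivative_X, Nat.cast_one]
    ring
  · rw [Qs2, Qs3]
    refine ⟨C (1/144 : ℂ) * (X ^ 3 + 16), -(C (1/144 : ℂ)), ?_⟩
    have hc : (C (1/144 : ℂ)) * 144 = 1 := by
      rw [show (144 : ℂ[X]) = C (144 : ℂ) by simp only [map_ofNat], ← C_mul]
      norm_num
    linear_combination hc
  · show 2 * (Qs 3).natDegree = 12
    have : (Qs 2).natDegree = 3 := by
      rw [Qs2, ← Tv_X, (monic_Tv monic_X).2]
      simp
    rw [this] at hd3
    rw [Qs1, natDegree_X] at hd3
    omega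

lemma pk_step (m : ℕ) (h0 : pk m) (h1 : pk (m+1)) : pk (m+2) := by
  obtain ⟨hD, hE, hcop_pq, hmp, hmq, hdq⟩ := h0
  obtain ⟨hA, hB, hcop_qr, hmq', hmr, hdr⟩ := h1
  replace hA : Qs (m+3) * Qs (m+1) = Tv (Qs (m+2)) := hA
  replace hB : derivative (Qs (m+3)) * Qs (m+1) - Qs (m+3) * derivative (Qs (m+1))
      = (2 * (((m+1) : ℕ) : ℂ[X]) + 3) * Qs (m+2) ^ 2 := hB
  replace hcop_qr : IsCoprime (Qs (m+2)) (Qs (m+3)) := hcop_qr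
  replace hmr : (Qs (m+3)).Monic := hmr
  replace hdr : 2 * (Qs (m+3)).natDegree = (m+3) * (m+4) := hdr
  push_cast at hB
  set s : ℂ[X] := Qs m with hs
  set p : ℂ[X] := Qs (m+1) with hp
  set q : ℂ[X] := Qs (m+2) with hq
  set r : ℂ[X] := Qs (m+3) with hr
  set dp : ℂ[X] := derivative p with hdp
  set dq : ℂ[X] := derivative q with hdqd
  set dr : ℂ[X] := derivative r with hdrd
  set ds : ℂ[X] := derivative s with hds
  set d2p : ℂ[X] := derivative dp with hd2p
  set d2q : ℂ[X] := derivative dq with hd2q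
  set d2r : ℂ[X] := derivative dr with hd2r
  set d3p : ℂ[X] := derivative d2p with hd3p
  set d3q : ℂ[X] := derivative d2q with hd3q
  set d3r : ℂ[X] := derivative d2r with hd3r
  set d4q : ℂ[X] := derivative d3q with hd4q
  have hp0 : p ≠ 0 := hmp.ne_zero
  have hq0 : q ≠ 0 := hmq.ne_zero
  have hr0 : r ≠ 0 := hmr.ne_zero
  -- differentiated hypotheses
  have hA1 : dr * p + r * dp = Uv q := by
    have h := congrArg derivative hA
    rwa [derivative_mul, deriv_Tv, ← hdp, ← hdrd] at h
  have hA2 : d2r * p + 2 * (dr * dp) + r * d2p = Vv q := by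
    have h := congrArg derivative hA1
    rw [derivative_add, derivative_mul, derivative_mul, deriv_Uv, ← hd2p, ← hd2r] at h
    linear_combination h
  have hB1 : d2r * p - r * d2p = (2 * (m : ℂ[X]) + 5) * (2 * (q * dq)) := by
    have h := congrArg derivative hB
    simp only [derivative_sub, derivative_add, derivative_mul, derivative_pow,
      derivative_natCast, derivative_ofNat, derivative_one, Nat.cast_ofNat, map_ofNat,
      show (2:ℕ)-1 = 1 from rfl, pow_one,
      ← hdp, ← hdqd, ← hdrd, ← hd2p, ← hd2q, ← hd2r] at h
    linear_combination h
  have hB2 : d3r * p + d2r * dp - dr * d2p - r * d3p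
      = (2 * (m : ℂ[X]) + 5) * (2 * (dq * dq + q * d2q)) := by
    have h := congrArg derivative hB1
    simp only [derivative_sub, derivative_add, derivative_mul, derivative_pow,
      derivative_natCast, derivative_ofNat, derivative_one, Nat.cast_ofNat, map_ofNat,
      show (2:ℕ)-1 = 1 from rfl, pow_one,
      ← hdp, ← hdqd, ← hdrd, ← hd2p, ← hd2q, ← hd2r, ← hd3p, ← hd3r] at h
    linear_combination h
  have hD1 : dq * s + q * ds = Uv p := by
    have h := congrArg derivative hD
    rwa [derivative_mul, deriv_Tv, ← hdqd, ← hds] at h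
  -- divisibility certificate
  have key1 : q * (((64 : ℂ[X]) * p^5 * dq^4 * s + (-512 : ℂ[X]) * p^5 * dp^2 * dq^2 * d2q + (256 : ℂ[X]) * p^5 * dp^2 * q * d2q^2 + (512 : ℂ[X]) * p^6 * d2p * dq^2 * d2q + (-256 : ℂ[X]) * p^6 * d2p * q * d2q^2 + (-256 : ℂ[X]) * p^7 * d2q^3 + (512 : ℂ[X]) * p^7 * dq * d2q * d3q + (-256 : ℂ[X]) * p^7 * dq^2 * d4q + (256 : ℂ[X]) * p^7 * dq^3 + (-256 : ℂ[X]) * p^7 * q * d3q^2 + (256 : ℂ[X]) * p^7 * q * d2q * d4q + (-384 : ℂ[X]) * p^7 * q * dq * d2q + (128 : ℂ[X]) * p^7 * q^2 * d3q + (-16 : ℂ[X]) * p^7 * q^3 + (128 : ℂ[X]) * X * p^5 * dp^2 * q * dq^2 + (-128 : ℂ[X]) * X * p^5 * dp^2 * q^2 * d2q + (-128 : ℂ[X]) * X * p^6 * d2p * q * dq^2 + (128 : ℂ[X]) * X * p^6 * d2p * q^2 * d2q + (-128 : ℂ[X]) * X * p^7 * dq^2 * d2q + (-128 : ℂ[X])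 * X * p^7 * q * d2q^2 + (256 : ℂ[X]) * X * p^7 * q * dq * d3q + (-64 : ℂ[X]) * X * p^7 * q^2 * d4q + (16 : ℂ[X]) * X^2 * p^5 * dp^2 * q^3 + (-16 : ℂ[X]) * X^2 * p^6 * d2p * q^3 + (-64 : ℂ[X]) * X^2 * p^7 * q * dq^2 + (64 : ℂ[X]) * X^2 * p^7 * q^2 * d2q + (-4 : ℂ[X]) * X^3 * p^7 * q^3)) = (-4) * p ^ 9 * Tv r := by
    simp only [Tv, Uv, Vv, ← hdp, ← hdqd, ← hdrd, ← hds, ← hd2p, ← hd2q, ← hd2r, ← hd3p,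
      ← hd3q, ← hd3r, ← hd4q] at hA hA1 hA2 hD ⊢
    linear_combination (((-64 : ℂ[X]) * p^5 * dp^2 * dq^2 + (64 : ℂ[X]) * p^5 * dp^2 * q * d2q + (64 : ℂ[X]) * p^6 * d2p * dq^2 + (-64 : ℂ[X]) * p^6 * d2p * q * d2q + (-64 : ℂ[X]) * p^6 * dp * dq * d2q + (64 : ℂ[X]) * p^6 * dp * q * d3q + (-16 : ℂ[X]) * p^6 * dp * q^2 + (-16 : ℂ[X]) * p^7 * dp * dr + (-16 : ℂ[X]) * p^8 * d2r + (-16 : ℂ[X]) * X * p^5 * dp^2 * q^2 + (16 : ℂ[X]) * X * p^6 * d2p * q^2 + (-32 : ℂ[X]) * X * p^6 * dp * q * dq + (16 : ℂ[X]) * X * p^7 * dq^2 + (-16 : ℂ[X]) * X * p^7 * q * d2q + (4 : ℂ[X]) * X * p^8 * r + (4 : ℂ[X]) * X^2 * p^7 * q^2)) * hA + (((64 : ℂ[X]) * p^6 * dp * dq^2 + (-64 : ℂ[X]) * p^6 * dp * q * d2q + (64 : ℂ[X]) * p^7 * dq * d2q + (-64 : ℂ[X]) * p^7 * q * d3q +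 (16 : ℂ[X]) * p^7 * q^2 + (16 : ℂ[X]) * p^8 * dr + (16 : ℂ[X]) * X * p^6 * dp * q^2 + (32 : ℂ[X]) * X * p^7 * q * dq)) * hA1 + (((-64 : ℂ[X]) * p^7 * dq^2 + (64 : ℂ[X]) * p^7 * q * d2q + (-16 : ℂ[X]) * X * p^7 * q^2)) * hA2 + (((64 : ℂ[X]) * p^5 * dq^4)) * hD
  have hdvd : q ∣ Tv r := by
    have h1 : q ∣ (-4) * p ^ 9 * Tv r := ⟨_, key1.symm⟩
    have h2 : q ∣ p ^ 9 * ((-4) * Tv r) := by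
      have : (-4) * p ^ 9 * Tv r = p ^ 9 * ((-4) * Tv r) := by ring
      rwa [this] at h1
    have h3 : q ∣ (-4) * Tv r := (hcop_pq.symm.pow_right).dvd_of_dvd_mul_left h2
    have hu : (C (-(1/4) : ℂ)) * ((-4 : ℂ[X]) * Tv r) = Tv r := by
      have h9 : (C (-(1/4) : ℂ)) * (-4 : ℂ[X]) = 1 := by
        rw [show (-4 : ℂ[X]) = C (-4 : ℂ) by simp only [map_neg, map_ofNat], ← C_mul]
        norm_num
      calc (C (-(1/4) : ℂ)) * ((-4 : ℂ[X]) * Tv r)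
          = ((C (-(1/4) : ℂ)) * (-4 : ℂ[X])) * Tv r := by ring
        _ = Tv r := by rw [h9, one_mul]
    rw [← hu]
    exact h3.mul_left _
  have hrec2 : Qs (m+4) * q = Tv r := by
    have hQdef : Qs (m+4) = Tv r / q := rfl
    rw [hQdef, mul_comm]
    exact EuclideanDomain.mul_div_cancel' hq0 hdvd
  obtain ⟨hmS, hdS⟩ := monic_deg_of_rec hrec2 hmq hmr
  -- Wronskian certificate
  have key2 : ((-256) * p ^ 8 * q ^ 2) * (q * Uv r - 2 * dq * Tv r)
      = ((-256) * p ^ 8 * q ^ 2) * ((2 * (m : ℂ[X]) + 7) * r ^ 2 * q) := by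
    simp only [Tv, Uv, Vv, ← hdp, ← hdqd, ← hdrd, ← hds, ← hd2p, ← hd2q, ← hd2r, ← hd3p,
      ← hd3q, ← hd3r, ← hd4q] at hA hA1 hB hB1 hB2 hD hD1 hE ⊢
    linear_combination (((2048 : ℂ[X]) * p^6 * q^4 * dq + (1024 : ℂ[X]) * p^6 * d2p * q^3 * r + (2048 : ℂ[X]) * p^6 * dp * q^2 * dq * r + (2048 : ℂ[X]) * p^7 * q^2 * dq * dr + (-1024 : ℂ[X]) * p^7 * q^3 * d2r + (4096 : ℂ[X]) * ((m : ℂ[X]) + 2) * p^6 * q^4 * dq + (-512 : ℂ[X]) * X * p^7 * q^3 * r)) * hB + (((-1024 : ℂ[X]) * p^6 * q^5 + (-2048 : ℂ[X]) * p^6 * dp * q^3 * r + (-2048 : ℂ[X]) * p^7 * q^2 * dq * r + (-2048 : ℂ[X]) * ((m : ℂ[X]) + 2) * p^6 * q^5)) * hB1 + (((1024 : ℂ[X]) * p^7 * q^3 * r)) * hB2 + (((512 : ℂ[X]) * p^7 * q^3 * r + (1024 : ℂ[X]) * ((m : ℂ[X]) + 2) * p^7 * q^3 * r)) * hA +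
      (((-512 : ℂ[X]) * p^6 * q^2 * dq * r^2)) * hD + (((256 : ℂ[X]) * p^6 * q^3 * r^2)) * hD1 + (((256 : ℂ[X]) * p^6 * q^3 * r^2)) * hE
  have hF : ((-256 : ℂ[X]) * p ^ 8 * q ^ 2) ≠ 0 := by
    refine mul_ne_zero (mul_ne_zero ?_ (pow_ne_zero _ hp0)) (pow_ne_zero _ hq0)
    intro hcon
    have := congrArg (fun P : ℂ[X] => P.coeff 0) hcon
    norm_num at this
  have key3 : q * Uv r - 2 * dq * Tv r = (2 * (m : ℂ[X]) + 7) * r ^ 2 * q :=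
    mul_left_cancel₀ hF key2
  have hrec2' : derivative (Qs (m+4)) * q + Qs (m+4) * dq = Uv r := by
    have h := congrArg derivative hrec2
    rwa [derivative_mul, deriv_Tv, ← hdqd] at h
  have hwr2 : derivative (Qs (m+4)) * q - Qs (m+4) * dq = (2 * (m : ℂ[X]) + 7) * r ^ 2 := by
    apply mul_left_cancel₀ hq0
    linear_combination q * hrec2' - 2 * dq * hrec2 + key3
  have hcop2 : IsCoprime r (Qs (m+4)) :=
    coprime_step hr0 hmS.ne_zero hrec2 hwr2 hcop_qr
  have hwr2' : derivative (Qs (m+4)) * Qs (m+2) - Qs (m+4) * derivative (Qs (m+2))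
      = (2 * (((m+2) : ℕ) : ℂ[X]) + 3) * Qs (m+3) ^ 2 := by
    push_cast
    linear_combination hwr2
  have hdS' : (Qs (m+4)).natDegree + q.natDegree = 2 * r.natDegree + 1 := hdS
  have hdeg2 : 2 * (Qs (m+4)).natDegree = (m+4) * (m+5) := by
    have hq2 : 2 * q.natDegree = m*m + 5*m + 6 := by rw [hdq]; ring
    have hr2 : 2 * r.natDegree = m*m + 7*m + 12 := by rw [hdr]; ring
    have e3 : (m+4) * (m+5) = m*m + 9*m + 20 := by ring
    rw [e3]
    generalize m*m = M at hq2 hr2 ⊢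
    omega
  exact ⟨hrec2, hwr2', hcop2, hmr, hmS, hdeg2⟩

lemma pk_all (n : ℕ) : pk n := by
  have key : ∀ k, pk k ∧ pk (k+1) := by
    intro k
    induction k with
    | zero => exact ⟨pk0, pk1⟩
    | succ j ih => exact ⟨ih.2, pk_step j ih.1 ih.2⟩
  exact (key n).1

end VY

/-- The Vorob'ev–Yablonski recursion is well defined in `ℂ[x]` (i.e. there is a sequence of
polynomials satisfying it together with the initial data), and every polynomial sequence
satisfying it consists of monic polynomials with `deg Q_n = n(n+1)/2`. -/
theorem vorobev_yablonski_monic_degree :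
    ∃ Q : ℕ → Polynomial ℂ,
      Q 0 = 1 ∧ Q 1 = X ∧
      (∀ n : ℕ, 1 ≤ n →
        Q (n + 1) * Q (n - 1) =
          X * (Q n) ^ 2 -
            4 * (derivative (derivative (Q n)) * Q n - (derivative (Q n)) ^ 2)) ∧
      (∀ n : ℕ, (Q n).Monic ∧ (Q n).natDegree = n * (n + 1) / 2) := by
  refine ⟨Qs, rfl, rfl, ?_, ?_⟩
  · intro n hn
    obtain ⟨k, rfl⟩ : ∃ k, n = k + 1 := ⟨n - 1, by omega⟩
    exact (pk_all k).1
  · intro n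
    match n with
    | 0 => exact ⟨monic_one, by simp [Qs0]⟩
    | 1 => exact ⟨monic_X, by simp [Qs1]⟩
    | (k+2) =>
      obtain ⟨_, _, _, _, hm, hdeg⟩ := pk_all k
      refine ⟨hm, ?_⟩
      have h2 : 2 * (Qs (k+2)).natDegree = (k+2) * (k+2+1) := hdeg
      generalize hM : (k+2) * (k+2+1) = M at h2 ⊢
      omega
end
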